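/- A connected binary matroid contains a restriction isomorphic to the circuit matroid of a totally odd subdivision of C3+ if and only if it has two odd circuits that intersect in an even number of elements. -/

import Mathlib

variable {α : Type*}

/-- `C` is a circuit of the matroid `M`: a minimal dependent set. -/
def MCircuit (M : Matroid α) (C : Set α) : Prop :=
  M.Dep C ∧ ∀ D ⊂ C, ¬ M.Dep D

/-- `X` is a cycle of `M`: a disjoint union of circuits. -/
def IsCycleM (M : Matroid α) (X : Set α) : Prop :=
  ∃ S : Finset (Set α), (∀ C ∈ S, MCircuit M C) ∧
    (S : Set (Set α)).Pairwise Disjoint ∧ X = ⋃ C ∈ S, C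

/-- `M` is binary: the symmetric difference of any two circuits is a disjoint
union of circuits. -/
def BinaryM (M : Matroid α) : Prop :=
  ∀ C1 C2, MCircuit M C1 → MCircuit M C2 → IsCycleM M (symmDiff C1 C2)

/-- `M` is connected: at least two elements, and any two elements lie on a
common circuit. -/
def ConnectedM (M : Matroid α) : Prop :=
  2 ≤ M.E.ncard ∧ ∀ a ∈ M.E, ∀ b ∈ M.E, a ≠ b →
    ∃ C, MCircuit M C ∧ a ∈ C ∧ b ∈ C

/-- the cycle space of a binary matroid: the `𝔽₂`-span of indicator vectors of
circuits -/
def cycleSpaceM (M : Matroid α) : Submodule (ZMod 2) (α → ZMod 2) :=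
  Submodule.span (ZMod 2)
    {x | ∃ C, MCircuit M C ∧ x = Set.indicator C (1 : α → ZMod 2)}

/-- `B` is a cycle basis of `M`: a family of cycles whose indicator vectors
form a basis of the cycle space. -/
def IsCycleBasisM (M : Matroid α) (B : Finset (Set α)) : Prop :=
  (∀ C ∈ B, IsCycleM M C) ∧
  LinearIndependent (ZMod 2)
    (fun C : B => Set.indicator C.1 (1 : α → ZMod 2)) ∧
  Submodule.span (ZMod 2)
    ((fun C => Set.indicator C (1 : α → ZMod 2)) '' (B : Set (Set α))) = cycleSpaceM M


open scoped Matroid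

open Set

namespace MCircuit

variable {M : Matroid α} {C D : Set α}

lemma dep (h : MCircuit M C) : M.Dep C := h.1

lemma subset_ground (h : MCircuit M C) : C ⊆ M.E := h.1.subset_ground

lemma finite [M.Finite] (h : MCircuit M C) : C.Finite :=
  M.ground_finite.subset h.subset_ground

lemma nonempty (h : MCircuit M C) : C.Nonempty := h.1.nonempty

lemma eq_of_subset (hC : MCircuit M C) (hD : MCircuit M D) (h : D ⊆ C) : D = C := by
  by_contra hne
  exact hC.2 D (h.ssubset_of_ne hne) hD.1

end MCircuit

lemma ncard_symmDiff_eq {A B : Set α} (hA : A.Finite) (hB : B.Finite) :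
    (symmDiff A B).ncard = (A \ B).ncard + (B \ A).ncard := by
  rw [Set.symmDiff_def]
  exact Set.ncard_union_eq (disjoint_sdiff_sdiff) (hA.diff) (hB.diff)

lemma ncard_symmDiff_mod {A B : Set α} (hA : A.Finite) (hB : B.Finite) :
    (symmDiff A B).ncard % 2 = (A.ncard + B.ncard) % 2 := by
  have h1 := Set.ncard_inter_add_ncard_diff_eq_ncard A B hA
  have h2 := Set.ncard_inter_add_ncard_diff_eq_ncard B A hB
  have h3 := ncard_symmDiff_eq hA hB
  have h4 : (A ∩ B).ncard = (B ∩ A).ncard := by rw [Set.inter_comm]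
  omega

lemma sum_ncard_biUnion (S : Finset (Set α)) (f : Set α → Set α)
    (hsub : ∀ C ∈ S, f C ⊆ C) (hdisj : (S : Set (Set α)).Pairwise Disjoint)
    (hfin : ∀ C ∈ S, (f C).Finite) :
    (⋃ C ∈ S, f C).ncard = ∑ C ∈ S, (f C).ncard := by
  classical
  induction S using Finset.induction_on with
  | empty => simp
  | @insert a s ha ih =>
    have hmem : ∀ C ∈ s, C ∈ insert a s := fun C hC => Finset.mem_insert_of_mem hC
    have hdisj' : (s : Set (Set α)).Pairwise Disjoint :=
      hdisj.mono (by simp [Finset.coe_insert, Set.subset_insert])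
    have hd : Disjoint (f a) (⋃ C ∈ s, f C) := by
      rw [Set.disjoint_iUnion₂_right]
      intro C hC
      have hne : a ≠ C := by rintro rfl; exact ha hC
      exact Set.disjoint_of_subset (hsub a (Finset.mem_insert_self a s))
        (hsub C (hmem C hC))
        (hdisj (by simp) (by simp [hC]) hne)
    have hfinU : (⋃ C ∈ s, f C).Finite :=
      Set.Finite.biUnion s.finite_toSet (fun C hC => hfin C (hmem C hC))
    rw [Finset.sum_insert ha, Finset.set_biUnion_insert,
      Set.ncard_union_eq hd (hfin a (Finset.mem_insert_self a s)) hfinU,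
      ih (fun C hC => hsub C (hmem C hC)) hdisj' (fun C hC => hfin C (hmem C hC))]

lemma exists_odd_trace (S : Finset (Set α)) (hdisj : (S : Set (Set α)).Pairwise Disjoint)
    (hfin : ∀ C ∈ S, C.Finite) (T : Set α)
    (hodd : Odd (((⋃ C ∈ S, C) ∩ T)).ncard) :
    ∃ W ∈ S, Odd ((W ∩ T).ncard) := by
  classical
  have h1 : (⋃ C ∈ S, C) ∩ T = ⋃ C ∈ S, (C ∩ T) := by
    ext x; simp; tauto
  rw [h1, sum_ncard_biUnion S (· ∩ T) (fun C _ => Set.inter_subset_left) hdisj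
    (fun C hC => (hfin C hC).inter_of_left T)] at hodd
  by_contra h
  push_neg at h
  simp only [Nat.not_odd_iff_even] at h
  have hev : Even (∑ C ∈ S, (C ∩ T).ncard) := Finset.even_sum (fun C => (C ∩ T).ncard) h
  exact (Nat.not_odd_iff_even.mpr hev) hodd

open scoped Classical in
lemma biUnion_erase (S : Finset (Set α)) (hdisj : (S : Set (Set α)).Pairwise Disjoint)
    {Y : Set α} (hY : Y ∈ S) :
    (⋃ C ∈ S, C) \ Y = ⋃ C ∈ S.erase Y, C := by
  classical
  ext x
  simp only [Set.mem_diff, Set.mem_iUnion, Finset.mem_erase, exists_prop]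
  constructor
  · rintro ⟨⟨C, hC, hxC⟩, hxY⟩
    refine ⟨C, ⟨?_, hC⟩, hxC⟩
    rintro rfl; exact hxY hxC
  · rintro ⟨C, ⟨hne, hC⟩, hxC⟩
    exact ⟨⟨C, hC, hxC⟩, fun hxY =>
      (hdisj hC hY hne).ne_of_mem hxC hxY rfl⟩

lemma subset_biUnion_finset {S : Finset (Set α)} {Y : Set α} (h : Y ∈ S) :
    Y ⊆ ⋃ C ∈ S, C :=
  fun x hx => Set.mem_iUnion₂.2 ⟨Y, h, hx⟩

lemma existsS {M : Matroid α} [M.Finite] (hconn : ConnectedM M) (hbin : BinaryM M)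
    {D1 D2 : Set α} (h1 : MCircuit M D1) (h2 : MCircuit M D2)
    (ho1 : Odd D1.ncard) (ho2 : Odd D2.ncard) (he : Even (D1 ∩ D2).ncard) :
    ∃ X C, MCircuit M X ∧ MCircuit M C ∧ Odd X.ncard ∧ Odd ((C \ X).ncard)
      ∧ (X ∩ C).Nonempty := by
  classical
  by_cases hI : (D1 ∩ D2).Nonempty
  · refine ⟨D1, D2, h1, h2, ho1, ?_, hI⟩
    have h3 := Set.ncard_inter_add_ncard_diff_eq_ncard D2 D1 h2.finite
    have h4 : (D2 ∩ D1).ncard = (D1 ∩ D2).ncard := by rw [Set.inter_comm]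
    simp only [Nat.odd_iff, Nat.even_iff] at *
    omega
  · rw [Set.not_nonempty_iff_eq_empty] at hI
    have hdisj12 : ∀ x, x ∈ D1 → x ∉ D2 := by
      intro x hx1 hx2
      have : x ∈ D1 ∩ D2 := ⟨hx1, hx2⟩
      rw [hI] at this; exact this
    obtain ⟨a, ha⟩ := h1.nonempty
    obtain ⟨b, hb⟩ := h2.nonempty
    have hab : a ≠ b := fun h => hdisj12 a ha (h ▸ hb)
    obtain ⟨K0, hK0, haK0, hbK0⟩ :=
      hconn.2 a (h1.subset_ground ha) b (h2.subset_ground hb) hab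
    set P := {n | ∃ K, (MCircuit M K ∧ (K ∩ D1).Nonempty ∧ (K ∩ D2).Nonempty)
      ∧ (K \ D1).ncard = n} with hP
    have hPne : P.Nonempty := ⟨_, K0, ⟨hK0, ⟨a, haK0, ha⟩, ⟨b, hbK0, hb⟩⟩, rfl⟩
    obtain ⟨K, ⟨hK, hKD1, hKD2⟩, hKcard⟩ := Nat.sInf_mem hPne
    by_cases hpar : Odd ((K \ D2).ncard)
    · exact ⟨D2, K, h2, hK, ho2, hpar, by rwa [Set.inter_comm]⟩
    · obtain ⟨S, hSc, hSd, hSu⟩ := hbin K D1 hK h1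
      obtain ⟨b', hb'K, hb'2⟩ := hKD2
      have hb'sym : b' ∈ symmDiff K D1 :=
        Set.mem_symmDiff.2 (Or.inl ⟨hb'K, fun h => hdisj12 b' h hb'2⟩)
      have hb'U : b' ∈ ⋃ C ∈ S, C := hSu ▸ hb'sym
      obtain ⟨Y, hYS, hb'Y⟩ : ∃ Y ∈ S, b' ∈ Y := by simpa using hb'U
      have hYsub : Y ⊆ symmDiff K D1 := by
        rw [hSu]; exact subset_biUnion_finset hYS
      have hYcirc := hSc Y hYS
      obtain ⟨x0, hx0⟩ := hKD1
      have hKd1ss : K \ D1 ⊂ K :=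
        (Set.ssubset_iff_of_subset Set.diff_subset).2 ⟨x0, hx0.1, fun h => h.2 hx0.2⟩
      have hY1 : (Y ∩ D1).Nonempty := by
        rw [Set.nonempty_iff_ne_empty]; intro h0
        have hsub : Y ⊆ K \ D1 := by
          intro x hx
          rcases Set.mem_symmDiff.1 (hYsub hx) with ⟨hxK, hx1⟩ | ⟨hx1, _⟩
          · exact ⟨hxK, hx1⟩
          · exfalso
            have : x ∈ Y ∩ D1 := ⟨hx, hx1⟩
            rw [h0] at this; exact this
        exact hK.2 Y (ssubset_of_subset_of_ssubset hsub hKd1ss) hYcirc.dep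
      have hY2 : (Y ∩ D2).Nonempty := ⟨b', hb'Y, hb'2⟩
      have hYd1sub : Y \ D1 ⊆ K \ D1 := by
        intro x hx
        rcases Set.mem_symmDiff.1 (hYsub hx.1) with ⟨hxK, _⟩ | ⟨hx1, _⟩
        · exact ⟨hxK, hx.2⟩
        · exact absurd hx1 hx.2
      have hminle : (K \ D1).ncard ≤ (Y \ D1).ncard := by
        rw [hKcard]; exact Nat.sInf_le ⟨Y, ⟨hYcirc, hY1, hY2⟩, rfl⟩
      have hEq : Y \ D1 = K \ D1 :=
        Set.eq_of_subset_of_ncard_le hYd1sub hminle (hK.finite.diff)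
      have hUY : (⋃ C ∈ S, C) = Y := by
        refine subset_antisymm ?_ (subset_biUnion_finset hYS)
        intro x hx
        obtain ⟨W, hWS, hxW⟩ : ∃ W ∈ S, x ∈ W := by simpa using hx
        by_cases hWY : W = Y
        · exact hWY ▸ hxW
        · exfalso
          have hdisjWY := hSd hWS hYS hWY
          have hWsub : W ⊆ symmDiff K D1 := by
            rw [hSu]; exact subset_biUnion_finset hWS
          have hWD1K : W ⊆ D1 \ K := by
            intro y hy
            rcases Set.mem_symmDiff.1 (hWsub hy) with ⟨hyK, hy1⟩ | ⟨hy1, hyK⟩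
            · exfalso
              have hyY : y ∈ Y \ D1 := by rw [hEq]; exact ⟨hyK, hy1⟩
              exact hdisjWY.ne_of_mem hy hyY.1 rfl
            · exact ⟨hy1, hyK⟩
          have hss : D1 \ K ⊂ D1 :=
            (Set.ssubset_iff_of_subset Set.diff_subset).2 ⟨x0, hx0.2, fun h => h.2 hx0.1⟩
          exact h1.2 W (ssubset_of_subset_of_ssubset hWD1K hss) (hSc W hWS).dep
      have hYcirc' : MCircuit M (symmDiff K D1) := by
        rw [hSu, hUY]; exact hYcirc
      have hpar2 : Odd (((symmDiff K D1) \ D2).ncard) := by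
        have hset : (symmDiff K D1) \ D2 = symmDiff (K \ D2) D1 := by
          ext x
          simp only [Set.mem_symmDiff, Set.mem_diff]
          constructor
          · rintro ⟨⟨hxK, hx1⟩ | ⟨hx1, hxK⟩, hx2⟩
            · exact Or.inl ⟨⟨hxK, hx2⟩, hx1⟩
            · exact Or.inr ⟨hx1, fun h => hxK h.1⟩
          · rintro (⟨⟨hxK, hx2⟩, hx1⟩ | ⟨hx1, hxK⟩)
            · exact ⟨Or.inl ⟨hxK, hx1⟩, hx2⟩
            · exact ⟨Or.inr ⟨hx1, fun h => hxK ⟨h, hdisj12 x hx1⟩⟩,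
                hdisj12 x hx1⟩
        rw [hset]
        have hmod := ncard_symmDiff_mod (hK.finite.diff (t := D2)) h1.finite
        rw [Nat.not_odd_iff_even] at hpar
        simp only [Nat.odd_iff, Nat.even_iff] at *
        omega
      exact ⟨D2, symmDiff K D1, h2, hYcirc', ho2, hpar2, ⟨b', hb'2, hb'sym⟩⟩

def SPair (M : Matroid α) (X C : Set α) : Prop :=
  MCircuit M X ∧ MCircuit M C ∧ Odd X.ncard ∧ Odd ((C \ X).ncard) ∧ (X ∩ C).Nonempty

lemma SPair.swap {M : Matroid α} [M.Finite] {X C : Set α} (hp : SPair M X C)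
    (hCodd : Odd C.ncard) : SPair M C X := by
  obtain ⟨hX, hC, hXodd, hCd, hI⟩ := hp
  refine ⟨hC, hX, hCodd, ?_, by rwa [Set.inter_comm]⟩
  have h1 := Set.ncard_inter_add_ncard_diff_eq_ncard X C hX.finite
  have h2 := Set.ncard_inter_add_ncard_diff_eq_ncard C X hC.finite
  have h4 : (X ∩ C).ncard = (C ∩ X).ncard := by rw [Set.inter_comm]
  simp only [Nat.odd_iff, Nat.even_iff] at *
  omega

lemma lemC1 {M : Matroid α} [M.Finite] (hbin : BinaryM M) {X C : Set α} (hp : SPair M X C)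
    (hmin : ∀ X' C', SPair M X' C' → (X ∪ C).ncard ≤ (X' ∪ C').ncard)
    {W : Set α} (hW : MCircuit M W) (hWs : W ⊆ X ∪ C) (hWodd : Odd ((W \ X).ncard)) :
    W = C ∨ W = symmDiff X C := by
  obtain ⟨hX, hC, hXodd, hCd, hI⟩ := hp
  obtain ⟨x0, hx0⟩ := hI
  have hCXssC : C \ X ⊂ C :=
    (Set.ssubset_iff_of_subset Set.diff_subset).2 ⟨x0, hx0.2, fun h => h.2 hx0.1⟩
  have hWX : (X ∩ W).Nonempty := by
    rw [Set.nonempty_iff_ne_empty]; intro h0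
    have hsub : W ⊆ C \ X := by
      intro x hx
      have hxX : x ∉ X := by
        intro hxX
        have : x ∈ X ∩ W := ⟨hxX, hx⟩
        rw [h0] at this; exact this
      exact ⟨(hWs hx).resolve_left hxX, hxX⟩
    exact hC.2 W (ssubset_of_subset_of_ssubset hsub hCXssC) hW.dep
  by_cases hWC : W = C
  · exact Or.inl hWC
  right
  by_cases hcov : C \ X ⊆ W
  · have hWXd : W \ X = C \ X := by
      apply subset_antisymm
      · intro x hx; exact ⟨(hWs hx.1).resolve_left hx.2, hx.2⟩
      · intro x hx; exact ⟨hcov hx, hx.2⟩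
    have hsub : symmDiff W C ⊆ X := by
      intro x hx
      rcases Set.mem_symmDiff.1 hx with ⟨hxW, hxC⟩ | ⟨hxC, hxW⟩
      · by_contra hxX
        have hxWX : x ∈ W \ X := ⟨hxW, hxX⟩
        rw [hWXd] at hxWX
        exact hxC hxWX.1
      · by_contra hxX
        exact hxW (hcov ⟨hxC, hxX⟩)
    obtain ⟨S, hSc, hSd, hSu⟩ := hbin W C hW hC
    have hne : (symmDiff W C).Nonempty := by
      rw [Set.nonempty_iff_ne_empty]
      intro h0
      exact hWC (symmDiff_eq_bot.mp h0)
    obtain ⟨v, hv⟩ := hne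
    have hvU : v ∈ ⋃ C' ∈ S, C' := hSu ▸ hv
    obtain ⟨V, hVS, hvV⟩ : ∃ V ∈ S, v ∈ V := by simpa using hvU
    have hVsub : V ⊆ symmDiff W C := by rw [hSu]; exact subset_biUnion_finset hVS
    have hVX : V = X := hX.eq_of_subset (hSc V hVS) (hVsub.trans hsub)
    have hXsub : X ⊆ symmDiff W C := hVX ▸ hVsub
    have hXeq : symmDiff W C = X := subset_antisymm hsub hXsub
    have h2 : symmDiff (symmDiff W C) C = symmDiff X C := by rw [hXeq]
    rwa [symmDiff_symmDiff_cancel_right] at h2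
  · obtain ⟨e, heC, heW⟩ := Set.not_subset.1 hcov
    have hpair : SPair M X W := ⟨hX, hW, hXodd, hWodd, hWX⟩
    have hle := hmin X W hpair
    have hss : X ∪ W ⊂ X ∪ C := by
      refine (Set.ssubset_iff_of_subset (Set.union_subset Set.subset_union_left hWs)).2
        ⟨e, Or.inr heC.1, ?_⟩
      rintro (h | h)
      · exact heC.2 h
      · exact heW h
    have hlt : (X ∪ W).ncard < (X ∪ C).ncard :=
      Set.ncard_lt_ncard hss (hX.finite.union hC.finite)
    omega

lemma claimA {M : Matroid α} [M.Finite] (hbin : BinaryM M) {X C : Set α} (hp : SPair M X C)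
    (hmin : ∀ X' C', SPair M X' C' → (X ∪ C).ncard ≤ (X' ∪ C').ncard) :
    MCircuit M (symmDiff X C) := by
  obtain ⟨hX, hC, hXodd, hCd, hI⟩ := hp
  obtain ⟨S, hSc, hSd, hSu⟩ := hbin X C hX hC
  have htr : ((⋃ C' ∈ S, C') ∩ (C \ X)) = C \ X := by
    rw [← hSu]
    ext x
    constructor
    · rintro ⟨_, h⟩; exact h
    · intro hx; exact ⟨Set.mem_symmDiff.2 (Or.inr ⟨hx.1, hx.2⟩), hx⟩
  have hodd : Odd (((⋃ C' ∈ S, C') ∩ (C \ X)).ncard) := by rw [htr]; exact hCd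
  obtain ⟨W, hWS, hWodd⟩ :=
    exists_odd_trace S hSd (fun C' hC' => (hSc C' hC').finite) _ hodd
  have hWsub : W ⊆ symmDiff X C := by rw [hSu]; exact subset_biUnion_finset hWS
  have hWs : W ⊆ X ∪ C := hWsub.trans Set.symmDiff_subset_union
  have hWdx : W \ X = W ∩ (C \ X) := by
    ext x
    constructor
    · intro hx; exact ⟨hx.1, (hWs hx.1).resolve_left hx.2, hx.2⟩
    · intro hx; exact ⟨hx.1, hx.2.2⟩
  have hWodd' : Odd ((W \ X).ncard) := by rw [hWdx]; exact hWodd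
  rcases lemC1 hbin ⟨hX, hC, hXodd, hCd, hI⟩ hmin (hSc W hWS) hWs hWodd' with h | h
  · exfalso
    obtain ⟨x0, hx0⟩ := hI
    have hx0W : x0 ∈ symmDiff X C := hWsub (h ▸ hx0.2)
    rcases Set.mem_symmDiff.1 hx0W with ⟨_, h2⟩ | ⟨_, h2⟩
    · exact h2 hx0.2
    · exact h2 hx0.1
  · rw [← h]; exact hSc W hWS

lemma keyMain {M : Matroid α} [M.Finite] (hbin : BinaryM M) {X C : Set α}
    (hpp : SPair M X C) (hCodd : Odd C.ncard)
    (hmin : ∀ X' C', SPair M X' C' → (X ∪ C).ncard ≤ (X' ∪ C').ncard)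
    {D : Set α} (hD : MCircuit M D) (hDs : D ⊆ X ∪ C) :
    D = X ∨ D = C ∨ D = symmDiff X C := by
  classical
  obtain ⟨hX, hC, hXodd, hCd, hI⟩ := hpp
  have hp : SPair M X C := ⟨hX, hC, hXodd, hCd, hI⟩
  have hp' : SPair M C X := hp.swap hCodd
  have hmin' : ∀ X' C', SPair M X' C' → (C ∪ X).ncard ≤ (X' ∪ C').ncard := by
    rw [Set.union_comm]; exact hmin
  have hE := claimA hbin hp hmin
  by_contra hcon
  push_neg at hcon
  obtain ⟨hDX, hDC, hDE⟩ := hcon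
  have hXCodd : Odd ((X \ C).ncard) := hp'.2.2.2.1
  have hDXeven : ¬ Odd ((D \ X).ncard) := by
    intro h
    rcases lemC1 hbin hp hmin hD hDs h with h' | h'
    · exact hDC h'
    · exact hDE h'
  have hDCeven : ¬ Odd ((D \ C).ncard) := by
    intro h
    rcases lemC1 hbin hp' hmin' hD (by rwa [Set.union_comm]) h with h' | h'
    · exact hDX h'
    · exact hDE (by rwa [symmDiff_comm] at h')
  have hDnsubC : ¬ D ⊆ C := fun h => hDC (hC.eq_of_subset hD h)
  obtain ⟨d0, hd0D, hd0C⟩ := Set.not_subset.1 hDnsubC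
  have hd0X : d0 ∈ X \ C := ⟨(hDs hd0D).resolve_right hd0C, hd0C⟩
  obtain ⟨S, hSc, hSd, hSu⟩ := hbin D (symmDiff X C) hD hE
  have htr1 : (⋃ C' ∈ S, C') ∩ (C \ X) = (C \ X) \ D := by
    rw [← hSu]
    ext x
    simp only [Set.mem_inter_iff, Set.mem_diff, Set.mem_symmDiff]
    constructor
    · rintro ⟨h, hx⟩
      refine ⟨hx, ?_⟩
      rcases h with ⟨hxD, hxE⟩ | ⟨hxE, hxD⟩
      · exact absurd (Or.inr ⟨hx.1, hx.2⟩) hxE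
      · exact hxD
    · rintro ⟨hx, hxD⟩
      exact ⟨Or.inr ⟨Or.inr ⟨hx.1, hx.2⟩, hxD⟩, hx⟩
  have hodd1 : Odd (((⋃ C' ∈ S, C') ∩ (C \ X)).ncard) := by
    rw [htr1]
    have e1 := Set.ncard_inter_add_ncard_diff_eq_ncard (C \ X) D (hC.finite.diff)
    have e2 : (C \ X) ∩ D = D \ X := by
      ext x
      constructor
      · rintro ⟨⟨hxC, hxX⟩, hxD⟩; exact ⟨hxD, hxX⟩
      · rintro ⟨hxD, hxX⟩; exact ⟨⟨(hDs hxD).resolve_left hxX, hxX⟩, hxD⟩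
    rw [e2] at e1
    rw [Nat.not_odd_iff_even] at hDXeven
    simp only [Nat.odd_iff, Nat.even_iff] at *
    omega
  obtain ⟨Zi, hZiS, hZiodd⟩ :=
    exists_odd_trace S hSd (fun W hW => (hSc W hW).finite) _ hodd1
  have hZisub : Zi ⊆ symmDiff D (symmDiff X C) := by
    rw [hSu]; exact subset_biUnion_finset hZiS
  have hZiXC : Zi ⊆ X ∪ C :=
    hZisub.trans (Set.symmDiff_subset_union.trans
      (Set.union_subset hDs Set.symmDiff_subset_union))
  have hZidx : Zi \ X = Zi ∩ (C \ X) := by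
    ext x
    constructor
    · intro hx; exact ⟨hx.1, (hZiXC hx.1).resolve_left hx.2, hx.2⟩
    · intro hx; exact ⟨hx.1, hx.2.2⟩
  have hZiodd' : Odd ((Zi \ X).ncard) := by rw [hZidx]; exact hZiodd
  rcases lemC1 hbin hp hmin (hSc Zi hZiS) hZiXC hZiodd' with hZiC | hZiE
  · -- Zi = C
    rw [hZiC] at hZiS
    have herase := biUnion_erase S hSd hZiS
    have htr2 : (⋃ W ∈ S.erase C, W) ∩ (X \ C) = (X \ C) \ D := by
      rw [← herase, ← hSu]
      ext x
      simp only [Set.mem_inter_iff, Set.mem_diff, Set.mem_symmDiff]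
      constructor
      · rintro ⟨⟨h, _⟩, hx⟩
        refine ⟨hx, ?_⟩
        rcases h with ⟨hxD, hxE⟩ | ⟨hxE, hxD⟩
        · exact absurd (Or.inl ⟨hx.1, hx.2⟩) hxE
        · exact hxD
      · rintro ⟨hx, hxD⟩
        exact ⟨⟨Or.inr ⟨Or.inl ⟨hx.1, hx.2⟩, hxD⟩, hx.2⟩, hx⟩
    have hodd2 : Odd (((⋃ W ∈ S.erase C, W) ∩ (X \ C)).ncard) := by
      rw [htr2]
      have e1 := Set.ncard_inter_add_ncard_diff_eq_ncard (X \ C) D (hX.finite.diff)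
      have e2 : (X \ C) ∩ D = D \ C := by
        ext x
        constructor
        · rintro ⟨⟨hxX, hxC⟩, hxD⟩; exact ⟨hxD, hxC⟩
        · rintro ⟨hxD, hxC⟩; exact ⟨⟨(hDs hxD).resolve_right hxC, hxC⟩, hxD⟩
      rw [e2] at e1
      rw [Nat.not_odd_iff_even] at hDCeven
      simp only [Nat.odd_iff, Nat.even_iff] at *
      omega
    have hSd' : ((S.erase C : Finset (Set α)) : Set (Set α)).Pairwise Disjoint :=
      hSd.mono (by simp [Finset.coe_subset, Finset.erase_subset])
    obtain ⟨Zj, hZjS', hZjodd⟩ :=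
      exists_odd_trace (S.erase C) hSd'
        (fun W hW => (hSc W (Finset.mem_of_mem_erase hW)).finite) _ hodd2
    have hZjS := Finset.mem_of_mem_erase hZjS'
    have hZjne : Zj ≠ C := (Finset.mem_erase.1 hZjS').1
    have hZjdisj : Disjoint Zj C := hSd hZjS hZiS hZjne
    have hZjsub : Zj ⊆ symmDiff D (symmDiff X C) := by
      rw [hSu]; exact subset_biUnion_finset hZjS
    have hZjXC : Zj ⊆ X ∪ C :=
      hZjsub.trans (Set.symmDiff_subset_union.trans
        (Set.union_subset hDs Set.symmDiff_subset_union))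
    have hZjdx : Zj \ C = Zj ∩ (X \ C) := by
      ext x
      constructor
      · intro hx; exact ⟨hx.1, (hZjXC hx.1).resolve_right hx.2, hx.2⟩
      · intro hx; exact ⟨hx.1, hx.2.2⟩
    have hZjodd' : Odd ((Zj \ C).ncard) := by rw [hZjdx]; exact hZjodd
    rcases lemC1 hbin hp' hmin' (hSc Zj hZjS) (by rwa [Set.union_comm]) hZjodd'
      with hZjX | hZjE
    · obtain ⟨x0, hx0⟩ := hI
      exact hZjdisj.ne_of_mem (hZjX ▸ hx0.1) hx0.2 rfl
    · rw [symmDiff_comm] at hZjE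
      obtain ⟨c0, hc0⟩ : (C \ X).Nonempty := by
        rcases hCd with ⟨k, hk⟩
        apply Set.nonempty_of_ncard_ne_zero
        omega
      have hc0Zj : c0 ∈ Zj := by
        rw [hZjE]; exact Set.mem_symmDiff.2 (Or.inr ⟨hc0.1, hc0.2⟩)
      exact hZjdisj.ne_of_mem hc0Zj hc0.1 rfl
  · -- Zi = symmDiff X C
    have hEZ : symmDiff X C ⊆ symmDiff D (symmDiff X C) := hZiE ▸ hZisub
    have hd0E : d0 ∈ symmDiff X C := Set.mem_symmDiff.2 (Or.inl ⟨hd0X.1, hd0X.2⟩)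
    rcases Set.mem_symmDiff.1 (hEZ hd0E) with ⟨_, hne⟩ | ⟨_, hnd⟩
    · exact hne hd0E
    · exact hnd hd0D

lemma backwardLHS {M : Matroid α} [M.Finite] (hconn : ConnectedM M) (hbin : BinaryM M)
    {D1 D2 : Set α} (h1 : MCircuit M D1) (h2 : MCircuit M D2)
    (ho1 : Odd D1.ncard) (ho2 : Odd D2.ncard) (he : Even (D1 ∩ D2).ncard) :
    ∃ C1 C2 : Set α, MCircuit M C1 ∧ MCircuit M C2 ∧ C1 ≠ C2 ∧
      Odd C1.ncard ∧ Odd ((C2 \ C1).ncard) ∧ MCircuit M (symmDiff C1 C2) ∧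
      ∀ C : Set α, MCircuit M C → C ⊆ C1 ∪ C2 →
        (C = C1 ∨ C = C2 ∨ C = symmDiff C1 C2) := by
  classical
  obtain ⟨X0, C0, hpair0⟩ := existsS hconn hbin h1 h2 ho1 ho2 he
  set P := {n | ∃ X C, SPair M X C ∧ (X ∪ C).ncard = n} with hPdef
  have hPne : P.Nonempty := ⟨_, X0, C0, hpair0, rfl⟩
  obtain ⟨X, C, hp0, hcard⟩ := Nat.sInf_mem hPne
  have hmin : ∀ X' C', SPair M X' C' → (X ∪ C).ncard ≤ (X' ∪ C').ncard := by
    intro X' C' hp'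
    rw [hcard]
    exact Nat.sInf_le ⟨X', C', hp', rfl⟩
  obtain ⟨hX, hC, hXodd, hCd, hI⟩ := hp0
  have hp : SPair M X C := ⟨hX, hC, hXodd, hCd, hI⟩
  have hE := claimA hbin hp hmin
  have hCXne : (C \ X).Nonempty := by
    rcases hCd with ⟨k, hk⟩
    apply Set.nonempty_of_ncard_ne_zero
    omega
  have hXneC : X ≠ C := by
    rintro rfl
    obtain ⟨x, hx⟩ := hCXne
    exact hx.2 hx.1
  by_cases hCodd : Odd C.ncard
  · exact ⟨X, C, hX, hC, hXneC, hXodd, hCd, hE,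
      fun D hD hDs => keyMain hbin hp hCodd hmin hD hDs⟩
  · set E := symmDiff X C with hEdef
    have hXCne : (X \ C).Nonempty := by
      rw [Set.nonempty_iff_ne_empty]
      intro h0
      have hsub : X ⊆ C := by rwa [Set.diff_eq_empty] at h0
      exact hXneC (hC.eq_of_subset hX hsub)
    have hEX : E \ X = C \ X := by
      ext x
      constructor
      · rintro ⟨hxE, hxX⟩
        rcases Set.mem_symmDiff.1 hxE with ⟨h1', _⟩ | ⟨h1', _⟩
        · exact absurd h1' hxX
        · exact ⟨h1', hxX⟩
      · rintro ⟨hxC, hxX⟩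
        exact ⟨Set.mem_symmDiff.2 (Or.inr ⟨hxC, hxX⟩), hxX⟩
    have hXE : X ∩ E = X \ C := by
      ext x
      constructor
      · rintro ⟨hxX, hxE⟩
        rcases Set.mem_symmDiff.1 hxE with ⟨_, h2'⟩ | ⟨_, h2'⟩
        · exact ⟨hxX, h2'⟩
        · exact absurd hxX h2'
      · rintro ⟨hxX, hxC⟩
        exact ⟨hxX, Set.mem_symmDiff.2 (Or.inl ⟨hxX, hxC⟩)⟩
    have hpE : SPair M X E := ⟨hX, hE, hXodd, by rwa [hEX], by rw [hXE]; exact hXCne⟩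
    have hUnion : X ∪ E = X ∪ C := by
      ext x
      constructor
      · rintro (h | h)
        · exact Or.inl h
        · rcases Set.mem_symmDiff.1 h with ⟨h1', _⟩ | ⟨h1', _⟩
          · exact Or.inl h1'
          · exact Or.inr h1'
      · rintro (h | h)
        · exact Or.inl h
        · by_cases hx : x ∈ X
          · exact Or.inl hx
          · exact Or.inr (Set.mem_symmDiff.2 (Or.inr ⟨h, hx⟩))
    have hminE : ∀ X' C', SPair M X' C' → (X ∪ E).ncard ≤ (X' ∪ C').ncard := by
      rw [hUnion]; exact hmin
    have hEodd : Odd E.ncard := by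
      rw [hEdef]
      have hmod := ncard_symmDiff_mod hX.finite hC.finite
      rw [Nat.not_odd_iff_even] at hCodd
      simp only [Nat.odd_iff, Nat.even_iff] at *
      omega
    have hXEsym : symmDiff X E = C := by
      rw [hEdef, symmDiff_symmDiff_cancel_left]
    have hXneE : X ≠ E := by
      obtain ⟨x0, hx0⟩ := hI
      intro h
      have hx0E : x0 ∈ E := h ▸ hx0.1
      rcases Set.mem_symmDiff.1 hx0E with ⟨_, h2'⟩ | ⟨_, h2'⟩
      · exact h2' hx0.2
      · exact h2' hx0.1
    refine ⟨X, E, hX, hE, hXneE, hXodd, by rwa [hEX], by rw [hXEsym]; exact hC, ?_⟩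
    intro D hD hDs
    exact keyMain hbin hpE hEodd hminE hD hDs


/-- a connected binary matroid has a restriction isomorphic to
the circuit matroid of a totally odd subdivision of `C3+` iff it has two odd
circuits intersecting in an even number of elements. -/
theorem stmt6 {α : Type*} (M : Matroid α) [M.Finite]
    (hconn : ConnectedM M) (hbin : BinaryM M) :
    (∃ C1 C2 : Set α, MCircuit M C1 ∧ MCircuit M C2 ∧ C1 ≠ C2 ∧
      Odd C1.ncard ∧ Odd (C2 \ C1).ncard ∧ MCircuit M (symmDiff C1 C2) ∧
      ∀ C : Set α, MCircuit M C → C ⊆ C1 ∪ C2 →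
        (C = C1 ∨ C = C2 ∨ C = symmDiff C1 C2)) ↔
    (∃ D1 D2 : Set α, MCircuit M D1 ∧ MCircuit M D2 ∧
      Odd D1.ncard ∧ Odd D2.ncard ∧ Even (D1 ∩ D2).ncard) := by
  constructor
  · rintro ⟨C1, C2, h1, h2, hne, ho1, hd, hsym, -⟩
    by_cases hi : Even ((C1 ∩ C2).ncard)
    · refine ⟨C1, C2, h1, h2, ho1, ?_, hi⟩
      have e1 := Set.ncard_inter_add_ncard_diff_eq_ncard C2 C1 h2.finite
      have e2 : (C2 ∩ C1).ncard = (C1 ∩ C2).ncard := by rw [Set.inter_comm]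
      simp only [Nat.odd_iff, Nat.even_iff] at *
      omega
    · refine ⟨C1, symmDiff C1 C2, h1, hsym, ho1, ?_, ?_⟩
      · have hmod := ncard_symmDiff_mod h1.finite h2.finite
        have e1 := Set.ncard_inter_add_ncard_diff_eq_ncard C2 C1 h2.finite
        have e2 : (C2 ∩ C1).ncard = (C1 ∩ C2).ncard := by rw [Set.inter_comm]
        rw [Nat.not_even_iff_odd] at hi
        simp only [Nat.odd_iff, Nat.even_iff] at *
        omega
      · have hset : C1 ∩ symmDiff C1 C2 = C1 \ C2 := by
          ext x
          constructor
          · rintro ⟨hx1, hxE⟩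
            rcases Set.mem_symmDiff.1 hxE with ⟨_, h2'⟩ | ⟨_, h2'⟩
            · exact ⟨hx1, h2'⟩
            · exact absurd hx1 h2'
          · rintro ⟨hx1, hx2⟩
            exact ⟨hx1, Set.mem_symmDiff.2 (Or.inl ⟨hx1, hx2⟩)⟩
        rw [hset]
        have e1 := Set.ncard_inter_add_ncard_diff_eq_ncard C1 C2 h1.finite
        rw [Nat.not_even_iff_odd] at hi
        simp only [Nat.odd_iff, Nat.even_iff] at *
        omega
  · rintro ⟨D1, D2, h1, h2, ho1, ho2, he⟩
    exact backwardLHS hconn hbin h1 h2 ho1 ho2 he
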